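/- Let X be uniformly distributed on [q] and let Ỹ be the output of a q-ary symmetric channel with crossover probability ε ≤ (q−1)/q applied to X. Let B = b(X) for a function b: [q] → {0,1} with Pr[B=0] = a where aq is an integer. Then with σ = 1 − εq/(q−1) and writing the mutual information in bits with σ = 1−2δ: I(B;Ỹ) = h_b(a) − a·h_b(2δ(1−a)) − (1−a)·h_b(2δa), where h_b is the binary entropy function. -/

import Mathlib

open Finset Real

/-- Binary entropy (in bits). -/
noncomputable def binEnt (x : ℝ) : ℝ :=
  -(x * Real.logb 2 x) - (1 - x) * Real.logb 2 (1 - x)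

lemma keyIdentity (a δ : ℝ) (ha0 : 0 ≤ a) (ha1 : a ≤ 1) (hδ0 : 0 ≤ δ) (hδ1 : 2*δ ≤ 1) :
    a*(1-2*δ*(1-a)) * Real.logb 2 ((1-2*δ*(1-a))/a)
      + (1-a)*(2*δ*a) * Real.logb 2 ((2*δ*a)/a)
      + a*(2*δ*(1-a)) * Real.logb 2 ((2*δ*(1-a))/(1-a))
      + (1-a)*(1-2*δ*a) * Real.logb 2 ((1-2*δ*a)/(1-a))
    = binEnt a - a * binEnt (2*δ*(1-a)) - (1-a)*binEnt (2*δ*a) := by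
  rcases eq_or_lt_of_le ha0 with h0 | h0
  · simp [← h0, binEnt]
  rcases eq_or_lt_of_le ha1 with h1 | h1
  · simp [h1, binEnt]
  have hane : a ≠ 0 := ne_of_gt h0
  have h1a : (0:ℝ) < 1 - a := by linarith
  have h1ane : (1:ℝ) - a ≠ 0 := ne_of_gt h1a
  rcases eq_or_lt_of_le hδ0 with hδ' | hδ'
  · simp only [← hδ', mul_zero, zero_mul]
    simp only [binEnt, one_div, Real.logb_inv, Real.logb_zero, Real.logb_one]
    simp [Real.logb_inv]
    ring
  have hu1 : 0 < 1 - 2*δ*(1-a) := by nlinarith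
  have hv1 : 0 < 1 - 2*δ*a := by nlinarith
  have h2δ : (2*δ) ≠ 0 := by positivity
  rw [show (2*δ*a)/a = 2*δ by field_simp,
      show (2*δ*(1-a))/(1-a) = 2*δ by field_simp,
      Real.logb_div (ne_of_gt hu1) hane,
      Real.logb_div (ne_of_gt hv1) h1ane]
  unfold binEnt
  rw [Real.logb_mul h2δ h1ane, Real.logb_mul h2δ hane]
  ring

lemma sum_fin_bool (q : ℕ) (b : Fin q → Bool) (A B : ℝ) :
    ∑ y : Fin q, (if b y = true then A else B)
      = ((univ.filter fun x => b x = true).card : ℝ) * A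
        + ((q:ℝ) - ((univ.filter fun x => b x = true).card : ℝ)) * B := by
  have hcc : (univ.filter fun x : Fin q => b x = true).card
      + (univ.filter fun x : Fin q => b x = false).card = q := by
    have := Finset.card_filter_add_card_filter_not
      (s := (univ : Finset (Fin q))) (p := fun x => b x = true)
    simpa using this
  rw [Finset.sum_ite]
  simp only [Finset.sum_const, nsmul_eq_mul]
  have h2 : (univ.filter fun x : Fin q => ¬ b x = true)
      = (univ.filter fun x : Fin q => b x = false) := by
    apply Finset.filter_congr; intro x _; simp
  rw [h2]
  have h3 : ((univ.filter fun x : Fin q => b x = false).card : ℝ)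
      = (q:ℝ) - ((univ.filter fun x : Fin q => b x = true).card : ℝ) := by
    have : ((univ.filter fun x : Fin q => b x = true).card : ℝ)
        + ((univ.filter fun x : Fin q => b x = false).card : ℝ) = q := by
      exact_mod_cast congrArg (Nat.cast (R := ℝ)) hcc
    linarith
  rw [h3]

/-- Mutual information (in bits) between `B = b(X)` and the output `Ỹ` of a
`q`-ary symmetric channel with crossover probability `ε ≤ (q-1)/q` applied to a
uniform input `X`, where `Pr[B = 0] = a` (symbol `0` encoded by `true`) with
`aq` an integer, equals `h_b(a) − a h_b(2δ(1−a)) − (1−a) h_b(2δa)` where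
`1 − εq/(q−1) = 1 − 2δ`. -/
theorem qary_symmetric_one_bit_mutual_information
    (q : ℕ) (hq : 2 ≤ q) (ε : ℝ) (hε0 : 0 ≤ ε) (hε1 : ε ≤ ((q : ℝ) - 1) / q)
    (b : Fin q → Bool) (a δ : ℝ)
    (ha : a = (((univ.filter fun x => b x = true).card : ℝ)) / q)
    (hδ : 1 - ε * q / ((q : ℝ) - 1) = 1 - 2 * δ) :
    (∑ bb : Bool, ∑ y : Fin q,
        (∑ x, (1 / (q : ℝ)) * (if y = x then 1 - ε else ε / ((q : ℝ) - 1)) *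
            (if b x = bb then (1 : ℝ) else 0)) *
          Real.logb 2
            ((∑ x, (1 / (q : ℝ)) * (if y = x then 1 - ε else ε / ((q : ℝ) - 1)) *
                (if b x = bb then (1 : ℝ) else 0)) /
              ((∑ x, (1 / (q : ℝ)) * (if b x = bb then (1 : ℝ) else 0)) *
                (∑ x, (1 / (q : ℝ)) *
                  (if y = x then 1 - ε else ε / ((q : ℝ) - 1)))))) =
      binEnt a - a * binEnt (2 * δ * (1 - a)) - (1 - a) * binEnt (2 * δ * a) := by
  have hq2 : (2:ℝ) ≤ (q:ℝ) := by exact_mod_cast hq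
  have hq0 : (0:ℝ) < q := by linarith
  have hqne : (q:ℝ) ≠ 0 := ne_of_gt hq0
  have hq1 : (0:ℝ) < (q:ℝ) - 1 := by linarith
  have hq1ne : (q:ℝ) - 1 ≠ 0 := ne_of_gt hq1
  have hε' : ε * q / ((q:ℝ)-1) = 2*δ := by linarith
  have hδ0 : 0 ≤ δ := by
    have h : 0 ≤ ε * q / ((q:ℝ)-1) := by positivity
    rw [hε'] at h; linarith
  have hδ1 : 2*δ ≤ 1 := by
    rw [← hε', div_le_one hq1]
    have := (le_div_iff₀ hq0).mp hε1
    linarith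
  have hεeq : ε = 2*δ*((q:ℝ)-1)/q := by
    rw [eq_div_iff hqne]
    have h := hε'
    rw [div_eq_iff hq1ne] at h
    linarith
  have hc : ε / ((q:ℝ)-1) = 2*δ/q := by
    rw [hεeq, div_div, mul_div_mul_right _ _ hq1ne]
  have hσ : 1 - ε - ε/((q:ℝ)-1) = 1 - 2*δ := by
    rw [hc, hεeq]
    have h : 2*δ*((q:ℝ)-1)/q + 2*δ/q = 2*δ := by
      rw [← add_div, div_eq_iff hqne]; ring
    linarith
  have hKle : ((univ.filter fun x => b x = true).card : ℝ) ≤ (q:ℝ) := by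
    have h := Finset.card_filter_le (univ : Finset (Fin q)) (fun x => b x = true)
    have h2 : (univ : Finset (Fin q)).card = q := by simp
    exact_mod_cast h2 ▸ h
  have ha0 : 0 ≤ a := by rw [ha]; positivity
  have ha1 : a ≤ 1 := by rw [ha, div_le_one hq0]; exact hKle
  have hKq : ((univ.filter fun x => b x = true).card : ℝ) = a * q := by
    rw [ha]; field_simp
  -- row sum of the channel
  have hPy : ∀ y : Fin q,
      (∑ x, (1 / (q : ℝ)) * (if y = x then 1 - ε else ε / ((q : ℝ) - 1))) = 1/q := by
    intro y
    have hpt : ∀ x : Fin q, (1/(q:ℝ)) * (if y = x then 1 - ε else ε/((q:ℝ)-1))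
        = (1/q)*(ε/((q:ℝ)-1)) + (if y = x then (1/q)*(1 - ε - ε/((q:ℝ)-1)) else 0) := by
      intro x; by_cases h : y = x <;> simp [h] <;> ring
    rw [Finset.sum_congr rfl fun x _ => hpt x, Finset.sum_add_distrib, Finset.sum_const,
      Finset.sum_ite_eq]
    simp only [Finset.card_univ, Fintype.card_fin, nsmul_eq_mul, Finset.mem_univ, if_true]
    rw [hσ, hc]
    field_simp
    try simp
    try ring
    try exact Or.inl trivial
  -- marginals of B
  have hMtrue : (∑ x, (1 / (q : ℝ)) * (if b x = true then (1:ℝ) else 0)) = a := by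
    rw [← Finset.mul_sum, Finset.sum_boole, ha]; ring
  have hMfalse : (∑ x, (1 / (q : ℝ)) * (if b x = false then (1:ℝ) else 0)) = 1 - a := by
    rw [← Finset.mul_sum, Finset.sum_boole]
    have hcc : (univ.filter fun x : Fin q => b x = true).card
        + (univ.filter fun x : Fin q => b x = false).card = q := by
      have := Finset.card_filter_add_card_filter_not
        (s := (univ : Finset (Fin q))) (p := fun x => b x = true)
      simpa using this
    have h3 : ((univ.filter fun x : Fin q => b x = false).card : ℝ)
        = (q:ℝ) - ((univ.filter fun x : Fin q => b x = true).card : ℝ) := by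
      have : ((univ.filter fun x : Fin q => b x = true).card : ℝ)
          + ((univ.filter fun x : Fin q => b x = false).card : ℝ) = q := by
        exact_mod_cast congrArg (Nat.cast (R := ℝ)) hcc
      linarith
    rw [h3, hKq]
    field_simp
  -- joint distribution
  have hJoint : ∀ (bb : Bool) (M : ℝ),
      (∑ x : Fin q, (1 / (q : ℝ)) * (if b x = bb then (1:ℝ) else 0)) = M →
      ∀ y : Fin q,
      (∑ x, (1 / (q : ℝ)) * (if y = x then 1 - ε else ε / ((q : ℝ) - 1)) *
          (if b x = bb then (1:ℝ) else 0))
      = (1/q) * ((1-2*δ) * (if b y = bb then (1:ℝ) else 0) + 2*δ*M) := by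
    intro bb M hM y
    have hpt : ∀ x : Fin q,
        (1/(q:ℝ)) * (if y = x then 1 - ε else ε/((q:ℝ)-1)) * (if b x = bb then (1:ℝ) else 0)
        = (ε/((q:ℝ)-1)) * ((1/q) * (if b x = bb then (1:ℝ) else 0))
          + (if y = x then (1/q)*(1 - ε - ε/((q:ℝ)-1)) * (if b x = bb then (1:ℝ) else 0)
              else 0) := by
      intro x
      by_cases h : y = x <;> by_cases h2 : b x = bb <;> simp [h, h2] <;> ring
    rw [Finset.sum_congr rfl fun x _ => hpt x, Finset.sum_add_distrib, ← Finset.mul_sum,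
      Finset.sum_ite_eq, hM]
    simp only [Finset.mem_univ, if_true]
    rw [hσ, hc]
    ring
  have e2 : ∀ X A : ℝ, ((1/(q:ℝ))*X)/(A*(1/q)) = X/A := by
    intro X A
    rw [mul_comm (1/(q:ℝ)) X, mul_div_mul_right _ _ (one_div_ne_zero hqne)]
  -- sum for bb = true
  have htrue : (∑ y : Fin q,
      (∑ x, (1 / (q : ℝ)) * (if y = x then 1 - ε else ε / ((q : ℝ) - 1)) *
          (if b x = true then (1 : ℝ) else 0)) *
        Real.logb 2
          ((∑ x, (1 / (q : ℝ)) * (if y = x then 1 - ε else ε / ((q : ℝ) - 1)) *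
              (if b x = true then (1 : ℝ) else 0)) /
            ((∑ x, (1 / (q : ℝ)) * (if b x = true then (1 : ℝ) else 0)) *
              (∑ x, (1 / (q : ℝ)) * (if y = x then 1 - ε else ε / ((q : ℝ) - 1))))))
      = ((univ.filter fun x => b x = true).card : ℝ) *
          ((1/(q:ℝ))*(1-2*δ*(1-a)) * Real.logb 2 ((1-2*δ*(1-a))/a))
        + ((q:ℝ) - ((univ.filter fun x => b x = true).card : ℝ)) *
          ((1/(q:ℝ))*(2*δ*a) * Real.logb 2 ((2*δ*a)/a)) := by
    have hpt : ∀ y : Fin q,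
        (∑ x, (1 / (q : ℝ)) * (if y = x then 1 - ε else ε / ((q : ℝ) - 1)) *
            (if b x = true then (1 : ℝ) else 0)) *
          Real.logb 2
            ((∑ x, (1 / (q : ℝ)) * (if y = x then 1 - ε else ε / ((q : ℝ) - 1)) *
                (if b x = true then (1 : ℝ) else 0)) /
              ((∑ x, (1 / (q : ℝ)) * (if b x = true then (1 : ℝ) else 0)) *
                (∑ x, (1 / (q : ℝ)) * (if y = x then 1 - ε else ε / ((q : ℝ) - 1)))))
        = (if b y = true then
            (1/(q:ℝ))*(1-2*δ*(1-a)) * Real.logb 2 ((1-2*δ*(1-a))/a)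
          else
            (1/(q:ℝ))*(2*δ*a) * Real.logb 2 ((2*δ*a)/a)) := by
      intro y
      rw [hJoint true a hMtrue y, hMtrue, hPy y]
      by_cases h : b y = true
      · rw [if_pos h, if_pos h]
        rw [show (1-2*δ)*(1:ℝ) + 2*δ*a = 1-2*δ*(1-a) by ring, e2]
      · rw [if_neg h, if_neg h]
        rw [show (1-2*δ)*(0:ℝ) + 2*δ*a = 2*δ*a by ring, e2]
    rw [Finset.sum_congr rfl fun y _ => hpt y, sum_fin_bool]
  -- sum for bb = false
  have hfalse : (∑ y : Fin q,
      (∑ x, (1 / (q : ℝ)) * (if y = x then 1 - ε else ε / ((q : ℝ) - 1)) *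
          (if b x = false then (1 : ℝ) else 0)) *
        Real.logb 2
          ((∑ x, (1 / (q : ℝ)) * (if y = x then 1 - ε else ε / ((q : ℝ) - 1)) *
              (if b x = false then (1 : ℝ) else 0)) /
            ((∑ x, (1 / (q : ℝ)) * (if b x = false then (1 : ℝ) else 0)) *
              (∑ x, (1 / (q : ℝ)) * (if y = x then 1 - ε else ε / ((q : ℝ) - 1))))))
      = ((univ.filter fun x => b x = true).card : ℝ) *
          ((1/(q:ℝ))*(2*δ*(1-a)) * Real.logb 2 ((2*δ*(1-a))/(1-a)))
        + ((q:ℝ) - ((univ.filter fun x => b x = true).card : ℝ)) *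
          ((1/(q:ℝ))*(1-2*δ*a) * Real.logb 2 ((1-2*δ*a)/(1-a))) := by
    have hpt : ∀ y : Fin q,
        (∑ x, (1 / (q : ℝ)) * (if y = x then 1 - ε else ε / ((q : ℝ) - 1)) *
            (if b x = false then (1 : ℝ) else 0)) *
          Real.logb 2
            ((∑ x, (1 / (q : ℝ)) * (if y = x then 1 - ε else ε / ((q : ℝ) - 1)) *
                (if b x = false then (1 : ℝ) else 0)) /
              ((∑ x, (1 / (q : ℝ)) * (if b x = false then (1 : ℝ) else 0)) *
                (∑ x, (1 / (q : ℝ)) * (if y = x then 1 - ε else ε / ((q : ℝ) - 1)))))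
        = (if b y = true then
            (1/(q:ℝ))*(2*δ*(1-a)) * Real.logb 2 ((2*δ*(1-a))/(1-a))
          else
            (1/(q:ℝ))*(1-2*δ*a) * Real.logb 2 ((1-2*δ*a)/(1-a))) := by
      intro y
      rw [hJoint false (1-a) hMfalse y, hMfalse, hPy y]
      by_cases h : b y = true
      · rw [if_neg (by simp [h] : ¬ (b y = false)), if_pos h]
        rw [show (1-2*δ)*(0:ℝ) + 2*δ*(1-a) = 2*δ*(1-a) by ring, e2]
      · rw [if_pos (by simpa using h : b y = false), if_neg h]
        rw [show (1-2*δ)*(1:ℝ) + 2*δ*(1-a) = 1-2*δ*a by ring, e2]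
    rw [Finset.sum_congr rfl fun y _ => hpt y, sum_fin_bool]
  rw [Fintype.sum_bool, htrue, hfalse, hKq,
    ← keyIdentity a δ ha0 ha1 hδ0 hδ1]
  field_simp
  ring
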